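/- For the bang-bang random walk on ℕ₀ with parameter q ∈ (0,1/2), the Green function of the walk killed just before its first positive hitting time of 0 satisfies: G_0(y,y) = (1 − (q/(1−q))^y)/(1−2q) for y > 0, G_0(x,y) = G_0(y,y) for x ≥ y > 0, and G_0(x,y) = (α^x − 1)/((1−2q)·α^y) for 0 < x ≤ y, where α = (1−q)/q. -/

import Mathlib

open MeasureTheory ENNReal
open scoped Classical NNReal

/-- A (time-homogeneous) Markov chain on a state space `E`, given by its
transition probabilities `p` and the family of path-space laws `P x` (the chain started
at `x`), characterized by its finite-dimensional distributions. -/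
structure MC (E : Type*) [MeasurableSpace E] where
  p : E → E → ℝ≥0∞
  P : E → Measure (ℕ → E)
  prob : ∀ x, IsProbabilityMeasure (P x)
  stochastic : ∀ x, ∑' y, p x y = 1
  fdd : ∀ (x : E) (n : ℕ) (xs : Fin (n + 1) → E),
    P x {ω | ∀ i : Fin (n + 1), ω i = xs i}
      = (if xs 0 = x then 1 else 0) * ∏ i : Fin n, p (xs i.castSucc) (xs i.succ)

/-- Irreducibility: every state is reachable from every state with positive probability. -/
def MC.Irreducible {E : Type*} [MeasurableSpace E] (M : MC E) : Prop :=
  ∀ x y : E, ∃ n : ℕ, 0 < M.P x {ω | ω n = y}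

/-- Recurrence: started from any state, the chain returns to that state infinitely often
almost surely. -/
def MC.Recurrent {E : Type*} [MeasurableSpace E] (M : MC E) : Prop :=
  ∀ x : E, M.P x {ω | ∀ N : ℕ, ∃ n, N ≤ n ∧ ω n = x} = 1

/-- Green function of the chain killed just before the first return time `T'_{x0}`:
`G_{x0}(x,y) = E_x[L^y_{T'_{x0} - 1}]`, the expected number of visits to `y` at times `n`
such that `x0` has not been visited at any time `1 ≤ k ≤ n`. -/
noncomputable def MC.green {E : Type*} [MeasurableSpace E] (M : MC E) (x0 x y : E) : ℝ≥0∞ :=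
  ∫⁻ ω, (∑' n : ℕ, if ω n = y ∧ ∀ k, 1 ≤ k → k ≤ n → ω k ≠ x0 then (1 : ℝ≥0∞) else 0) ∂ M.P x

/-- Transition probabilities of the "bang-bang" random walk on `ℕ` with parameter `q`:
`p(0,1) = 1`, and for `y ≥ 1`, `p(y, y+1) = q`, `p(y, y-1) = 1 - q`. -/
noncomputable def bangP (q : ℝ) : ℕ → ℕ → ℝ≥0∞ := fun x y =>
  if x = 0 then (if y = 1 then 1 else 0)
  else if y = x + 1 then ENNReal.ofReal q
  else if y + 1 = x then ENNReal.ofReal (1 - q)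
  else 0

namespace BB

/-- weight of a path -/
noncomputable def W (q : ℝ) {n : ℕ} (v : Fin (n + 1) → ℕ) : ℝ≥0∞ :=
  ∏ i : Fin n, bangP q (v i.castSucc) (v i.succ)

/-- admissible paths: end at `y`, avoid `0` at all positive times -/
def adm (y : ℕ) {n : ℕ} (v : Fin (n + 1) → ℕ) : Prop :=
  v (Fin.last n) = y ∧ ∀ i : Fin (n + 1), i ≠ 0 → v i ≠ 0

noncomputable def f (q : ℝ) (n x y : ℕ) : ℝ≥0∞ :=
  ∑' v : Fin (n + 1) → ℕ, if adm y v then (if v 0 = x then 1 else 0) * W q v else 0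

/-- the event whose probabilities the Green function sums -/
def A (y n : ℕ) : Set (ℕ → ℕ) := {ω | ω n = y ∧ ∀ k, 1 ≤ k → k ≤ n → ω k ≠ 0}

lemma cylinder_measurable {n : ℕ} (v : Fin (n + 1) → ℕ) :
    MeasurableSet {ω : ℕ → ℕ | ∀ i : Fin (n + 1), ω i = v i} := by
  have : {ω : ℕ → ℕ | ∀ i : Fin (n + 1), ω i = v i}
      = ⋂ i : Fin (n + 1), (fun ω : ℕ → ℕ => ω i) ⁻¹' {v i} := by
    ext ω; simp [Set.mem_iInter]
  rw [this]
  exact MeasurableSet.iInter fun i => measurable_pi_apply _ (measurableSet_singleton _)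

lemma A_measurable (y n : ℕ) : MeasurableSet (A y n) := by
  have : A y n = ((fun ω : ℕ → ℕ => ω n) ⁻¹' {y}) ∩
      ⋂ (k : ℕ), ⋂ (_ : 1 ≤ k), ⋂ (_ : k ≤ n), ((fun ω : ℕ → ℕ => ω k) ⁻¹' {0})ᶜ := by
    ext ω; simp [A]
  rw [this]
  exact (measurable_pi_apply _ (measurableSet_singleton _)).inter
    (MeasurableSet.iInter fun k => MeasurableSet.iInter fun _ => MeasurableSet.iInter fun _ =>
      (measurable_pi_apply _ (measurableSet_singleton _)).compl)

lemma A_eq (y n : ℕ) : A y n = ⋃ v : Fin (n + 1) → ℕ,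
    (if adm y v then {ω : ℕ → ℕ | ∀ i : Fin (n + 1), ω i = v i} else ∅) := by
  ext ω
  constructor
  · rintro ⟨h1, h2⟩
    refine Set.mem_iUnion.2 ⟨fun i => ω i, ?_⟩
    rw [if_pos]
    · exact fun i => rfl
    · constructor
      · simpa using h1
      · intro i hi
        refine h2 i ?_ ?_
        · exact Nat.one_le_iff_ne_zero.2 (fun h => hi (Fin.ext (by simpa using h)))
        · exact Nat.lt_succ_iff.1 i.isLt
  · intro hω
    obtain ⟨v, hv⟩ := Set.mem_iUnion.1 hω
    by_cases hadm : adm y v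
    · rw [if_pos hadm] at hv
      constructor
      · exact (hv (Fin.last n)).trans hadm.1
      · intro k hk1 hkn
        have hk : k < n + 1 := Nat.lt_succ_of_le hkn
        have := hv ⟨k, hk⟩
        rw [show ((⟨k, hk⟩ : Fin (n+1)) : ℕ) = k from rfl] at this
        rw [this]
        exact hadm.2 ⟨k, hk⟩ (by simp [Fin.ext_iff]; omega)
    · rw [if_neg hadm] at hv; exact hv.elim

lemma prob_A (q : ℝ) (M : MC ℕ) (hp : M.p = bangP q) (x y n : ℕ) :
    M.P x (A y n) = f q n x y := by
  rw [A_eq]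
  rw [measure_iUnion ?_ ?_]
  · refine tsum_congr fun v => ?_
    by_cases hadm : adm y v
    · rw [if_pos hadm, if_pos hadm, M.fdd x n v, hp]; simp [W]
    · rw [if_neg hadm, if_neg hadm, measure_empty]
  · intro v w hvw
    by_cases hv : adm y v
    · by_cases hw : adm y w
      · rw [Function.onFun, if_pos hv, if_pos hw]
        rw [Set.disjoint_left]
        intro ω hω1 hω2
        apply hvw
        funext i
        rw [← hω1 i, ← hω2 i]
      · simp [Function.onFun, if_neg hw]
    · simp [Function.onFun, if_neg hv]
  · intro v
    by_cases hv : adm y v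
    · rw [if_pos hv]; exact cylinder_measurable v
    · rw [if_neg hv]; exact MeasurableSet.empty

lemma green_eq (q : ℝ) (M : MC ℕ) (hp : M.p = bangP q) (x y : ℕ) :
    M.green 0 x y = ∑' n, f q n x y := by
  have h1 : M.green 0 x y
      = ∫⁻ ω, (∑' n : ℕ, (A y n).indicator (fun _ => (1:ℝ≥0∞)) ω) ∂ M.P x := by
    unfold MC.green
    congr 1; funext ω
    refine tsum_congr fun n => ?_
    by_cases h : ω ∈ A y n
    · rw [Set.indicator_of_mem h]; exact if_pos h
    · rw [Set.indicator_of_notMem h]; exact if_neg h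
  rw [h1, lintegral_tsum fun n =>
    ((measurable_const.indicator (A_measurable y n))).aemeasurable]
  refine tsum_congr fun n => ?_
  rw [lintegral_indicator_const (A_measurable y n), one_mul]
  exact prob_A q M hp x y n

end BB

namespace BB2
open BB

lemma f_zero (q : ℝ) (x y : ℕ) : f q 0 x y = if x = y then 1 else 0 := by
  unfold f
  rw [tsum_eq_single (fun _ => y) ?_]
  · have hadm : adm y (fun _ : Fin 1 => y) := by
      constructor
      · rfl
      · intro i hi
        exact absurd (Fin.ext (by omega : (i:ℕ) = ((0 : Fin 1):ℕ))) hi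
    rw [if_pos hadm]
    have hW : W q (fun _ : Fin 1 => y) = 1 := by
      unfold W; exact Finset.prod_empty.trans rfl
    rw [hW, mul_one]
    by_cases h : x = y
    · rw [if_pos h, if_pos h.symm]
    · rw [if_neg h, if_neg (fun hh => h hh.symm)]
  · intro v hv
    rw [if_neg]
    intro hadm
    apply hv
    funext i
    rw [show i = Fin.last 0 from Fin.ext (by omega)]
    exact hadm.1


lemma adm_cons (y a : ℕ) {n : ℕ} (w : Fin (n + 1) → ℕ) :
    adm y (Fin.cons a w) ↔ (w (Fin.last n) = y ∧ ∀ j, w j ≠ 0) := by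
  unfold adm
  constructor
  · rintro ⟨h1, h2⟩
    refine ⟨?_, fun j => ?_⟩
    · rw [← Fin.succ_last, Fin.cons_succ] at h1; exact h1
    · have := h2 j.succ (Fin.succ_ne_zero j)
      rwa [Fin.cons_succ] at this
  · rintro ⟨h1, h2⟩
    refine ⟨?_, fun i hi => ?_⟩
    · rw [← Fin.succ_last, Fin.cons_succ]; exact h1
    · obtain ⟨j, rfl⟩ := Fin.eq_succ_of_ne_zero hi
      rw [Fin.cons_succ]; exact h2 j

lemma W_cons (q : ℝ) (a : ℕ) {n : ℕ} (w : Fin (n + 1) → ℕ) :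
    W q (Fin.cons a w) = bangP q a (w 0) * W q w := by
  unfold W
  rw [Fin.prod_univ_succ]
  have e1 : ∀ i : Fin n,
      bangP q ((Fin.cons a w : Fin (n+2) → ℕ) (i.succ).castSucc)
        ((Fin.cons a w : Fin (n+2) → ℕ) (i.succ).succ)
      = bangP q (w i.castSucc) (w i.succ) := by
    intro i
    rw [show ((i.succ : Fin (n+1)).castSucc : Fin (n+2)) = (i.castSucc).succ from rfl,
      Fin.cons_succ, Fin.cons_succ]
  rw [Finset.prod_congr rfl (fun i _ => e1 i)]
  have e0 : bangP q ((Fin.cons a w : Fin (n+2) → ℕ) ((0 : Fin (n+1)).castSucc))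
      ((Fin.cons a w : Fin (n+2) → ℕ) ((0 : Fin (n+1)).succ))
      = bangP q a (w 0) := by simp
  rw [e0]

lemma f_succ (q : ℝ) (n x y : ℕ) :
    f q (n + 1) x y = ∑' z, bangP q x z * (if z = 0 then 0 else f q n z y) := by
  have lhs1 : f q (n + 1) x y = ∑' (a : ℕ) (w : Fin (n + 1) → ℕ),
      (if (w (Fin.last n) = y ∧ ∀ j, w j ≠ 0)
        then (if a = x then (1:ℝ≥0∞) else 0) * (bangP q a (w 0) * W q w) else 0) := by
    unfold f
    rw [← ((Fin.consEquiv (fun _ : Fin (n+2) => ℕ)).tsum_eq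
      (fun v : Fin (n+2) → ℕ => if adm y v then (if v 0 = x then (1:ℝ≥0∞) else 0) * W q v else 0))]
    rw [← ENNReal.tsum_prod]
    refine tsum_congr fun p => ?_
    have he : (Fin.consEquiv (fun _ : Fin (n+2) => ℕ)) p = Fin.cons p.1 p.2 := rfl
    rw [he]
    by_cases h : (p.2 (Fin.last n) = y ∧ ∀ j, p.2 j ≠ 0)
    · rw [if_pos h, if_pos ((adm_cons y p.1 p.2).2 h), Fin.cons_zero, W_cons]
    · rw [if_neg h, if_neg (fun hh => h ((adm_cons y p.1 p.2).1 hh))]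
  rw [lhs1]
  have hz : ∀ (a : ℕ), a ≠ x → (∑' w : Fin (n + 1) → ℕ,
      (if (w (Fin.last n) = y ∧ ∀ j, w j ≠ 0)
        then (if a = x then (1:ℝ≥0∞) else 0) * (bangP q a (w 0) * W q w) else 0)) = 0 := by
    intro a ha
    have : ∀ w : Fin (n + 1) → ℕ, (if (w (Fin.last n) = y ∧ ∀ j, w j ≠ 0)
        then (if a = x then (1:ℝ≥0∞) else 0) * (bangP q a (w 0) * W q w) else 0) = 0 := by
      intro w
      by_cases h : (w (Fin.last n) = y ∧ ∀ j, w j ≠ 0)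
      · rw [if_pos h, if_neg ha, zero_mul]
      · rw [if_neg h]
    rw [tsum_congr this, tsum_zero]
  rw [tsum_eq_single x hz]
  have h1 : ∀ w : Fin (n + 1) → ℕ, (if (w (Fin.last n) = y ∧ ∀ j, w j ≠ 0)
        then (if x = x then (1:ℝ≥0∞) else 0) * (bangP q x (w 0) * W q w) else 0)
      = (if (w (Fin.last n) = y ∧ ∀ j, w j ≠ 0) then bangP q x (w 0) * W q w else 0) := by
    intro w
    rw [if_pos rfl, one_mul]
  rw [tsum_congr h1]
  -- now regroup by the first coordinate of w
  have rhs1 : ∀ z : ℕ, bangP q x z * (if z = 0 then 0 else f q n z y)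
      = ∑' w : Fin (n + 1) → ℕ, (if z = 0 then 0
          else (if adm y w then (if w 0 = z then (1:ℝ≥0∞) else 0) * (bangP q x z * W q w) else 0)) := by
    intro z
    by_cases hz0 : z = 0
    · rw [if_pos hz0, mul_zero]
      rw [tsum_congr (fun w => if_pos hz0), tsum_zero]
    · rw [if_neg hz0]
      unfold f
      rw [← ENNReal.tsum_mul_left]
      refine tsum_congr fun w => ?_
      rw [if_neg hz0]
      by_cases hadm : adm y w
      · rw [if_pos hadm, if_pos hadm]; ring
      · rw [if_neg hadm, if_neg hadm, mul_zero]
  rw [tsum_congr rhs1, ← ENNReal.tsum_comm]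
  refine tsum_congr fun w => ?_
  have hzero : ∀ z : ℕ, z ≠ w 0 → (if z = 0 then 0
      else (if adm y w then (if w 0 = z then (1:ℝ≥0∞) else 0) * (bangP q x z * W q w) else 0)) = 0 := by
    intro z hzw
    by_cases hz0 : z = 0
    · rw [if_pos hz0]
    · rw [if_neg hz0]
      by_cases hadm : adm y w
      · rw [if_pos hadm, if_neg (fun h => hzw h.symm), zero_mul]
      · rw [if_neg hadm]
  rw [tsum_eq_single (w 0) hzero]
  by_cases h0 : w 0 = 0
  · rw [if_pos h0, if_neg (fun h => h.2 0 h0)]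
  · rw [if_neg h0]
    by_cases hadm : adm y w
    · have hall : ∀ j, w j ≠ 0 := by
        intro j; rcases eq_or_ne j 0 with rfl | hj
        · exact h0
        · exact hadm.2 j hj
      rw [if_pos hadm, if_pos rfl, one_mul, if_pos ⟨hadm.1, hall⟩]
    · rw [if_neg hadm, if_neg (fun h => hadm ⟨h.1, fun i _ => h.2 i⟩)]


lemma f_succ' (q : ℝ) (n x y : ℕ) (hx : 1 ≤ x) :
    f q (n + 1) x y = ENNReal.ofReal q * f q n (x + 1) y
      + ENNReal.ofReal (1 - q) * (if x = 1 then 0 else f q n (x - 1) y) := by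
  rw [f_succ]
  have hne : x ≠ 0 := by omega
  rw [tsum_eq_sum (s := ({x + 1, x - 1} : Finset ℕ)) ?_]
  · rw [Finset.sum_pair (by omega : x + 1 ≠ x - 1)]
    congr 1
    · rw [if_neg (by omega : ¬ x + 1 = 0)]
      congr 1
      unfold bangP; rw [if_neg hne, if_pos rfl]
    · rw [show bangP q x (x - 1) = ENNReal.ofReal (1 - q) from ?_]
      · by_cases h1 : x = 1
        · rw [if_pos (by omega : x - 1 = 0), if_pos h1]
        · rw [if_neg (by omega : ¬ x - 1 = 0), if_neg h1]
      · unfold bangP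
        rw [if_neg hne, if_neg (by omega : ¬ x - 1 = x + 1), if_pos (by omega : x - 1 + 1 = x)]
  · intro z hzs
    simp only [Finset.mem_insert, Finset.mem_singleton, not_or] at hzs
    have hb : bangP q x z = 0 := by
      unfold bangP
      rw [if_neg hne, if_neg hzs.1, if_neg (by omega : ¬ z + 1 = x)]
    rw [hb, zero_mul]

/-- partial sums -/
noncomputable def Sp (q : ℝ) (N x y : ℕ) : ℝ≥0∞ := ∑ n ∈ Finset.range N, f q n x y

lemma Sp_succ (q : ℝ) (N x y : ℕ) (hx : 1 ≤ x) :
    Sp q (N + 1) x y = (if x = y then 1 else 0) + ENNReal.ofReal q * Sp q N (x + 1) y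
      + ENNReal.ofReal (1 - q) * (if x = 1 then 0 else Sp q N (x - 1) y) := by
  unfold Sp
  rw [Finset.sum_range_succ' (fun n => f q n x y) N, f_zero]
  rw [Finset.sum_congr rfl (fun n _ => f_succ' q n x y hx)]
  rw [Finset.sum_add_distrib, ← Finset.mul_sum, ← Finset.mul_sum]
  by_cases h1 : x = 1
  · simp only [if_pos h1]
    rw [Finset.sum_const, smul_zero]
    ring
  · simp only [if_neg h1]
    ring

lemma G_fix (q : ℝ) (x y : ℕ) (hx : 1 ≤ x) :
    (∑' n, f q n x y) = (if x = y then 1 else 0) + ENNReal.ofReal q * (∑' n, f q n (x + 1) y)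
      + ENNReal.ofReal (1 - q) * (if x = 1 then 0 else (∑' n, f q n (x - 1) y)) := by
  rw [tsum_eq_zero_add' ENNReal.summable, f_zero]
  rw [tsum_congr (fun n => f_succ' q n x y hx), ENNReal.tsum_add,
    ENNReal.tsum_mul_left, ENNReal.tsum_mul_left]
  by_cases h1 : x = 1
  · simp only [if_pos h1]
    rw [tsum_zero]
    ring
  · simp only [if_neg h1]
    ring

end BB2

namespace BB2

noncomputable def gR (q : ℝ) (x y : ℕ) : ℝ :=
  (((1 - q) / q) ^ (min x y) - 1) / ((1 - 2 * q) * ((1 - q) / q) ^ y)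

section
variable {q : ℝ} (hq0 : 0 < q) (hq : q < 1 / 2)

include hq0 hq

lemma ha1 : 1 < (1 - q) / q := by
  rw [lt_div_iff₀ hq0]; linarith

lemma h12 : 0 < 1 - 2 * q := by linarith

lemma gR_nonneg (x y : ℕ) : 0 ≤ gR q x y := by
  have h1 := ha1 hq0 hq
  have h2 := h12 hq0 hq
  apply div_nonneg
  · have : (1:ℝ) ≤ ((1 - q) / q) ^ (min x y) := one_le_pow₀ (le_of_lt h1)
    linarith
  · have : (0:ℝ) < ((1 - q) / q) ^ y := by positivity
    nlinarith

lemma gR_le (x y : ℕ) : gR q x y ≤ 1 / (1 - 2 * q) := by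
  have h1 := ha1 hq0 hq
  have h2 := h12 hq0 hq
  have hpow : ((1 - q) / q) ^ (min x y) ≤ ((1 - q) / q) ^ y :=
    pow_le_pow_right₀ (le_of_lt h1) (min_le_right x y)
  have hpy : (0:ℝ) < ((1 - q) / q) ^ y := by positivity
  rw [gR, div_le_div_iff₀ (by positivity) h2]
  nlinarith

lemma gR_rec (x y : ℕ) (hx : 1 ≤ x) (hy : 1 ≤ y) :
    gR q x y = (if x = y then 1 else 0) + q * gR q (x + 1) y
      + (1 - q) * (if x = 1 then 0 else gR q (x - 1) y) := by
  have h1ha := ha1 hq0 hq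
  have h2 := h12 hq0 hq
  have hqne : q ≠ 0 := ne_of_gt hq0
  obtain ⟨x', rfl⟩ : ∃ x', x = x' + 1 := ⟨x - 1, by omega⟩
  unfold gR
  obtain ⟨a, hadef⟩ : ∃ a : ℝ, a = (1 - q) / q := ⟨_, rfl⟩
  rw [← hadef]
  have h1 : 1 < a := hadef ▸ h1ha
  have ha0 : (0:ℝ) < a := by linarith
  have hqa : q * a = 1 - q := by rw [hadef, mul_comm, div_mul_cancel₀ _ hqne]
  have hane : a ≠ 0 := ne_of_gt ha0
  have h2ne : (1 - 2 * q) ≠ 0 := ne_of_gt h2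
  have key2 : ∀ (y' : ℕ) (A B i : ℝ), A = i * ((1 - 2 * q) * a ^ y') + q * B →
      A / ((1 - 2 * q) * a ^ y') = i + q * (B / ((1 - 2 * q) * a ^ y')) := by
    intro y' A B i h
    have hD : ((1 - 2 * q) * a ^ y') ≠ 0 := mul_ne_zero h2ne (pow_ne_zero _ hane)
    rw [h]; field_simp
  have key3 : ∀ (y' : ℕ) (A B C i : ℝ),
      A = i * ((1 - 2 * q) * a ^ y') + q * B + (1 - q) * C →
      A / ((1 - 2 * q) * a ^ y') = i + q * (B / ((1 - 2 * q) * a ^ y'))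
        + (1 - q) * (C / ((1 - 2 * q) * a ^ y')) := by
    intro y' A B C i h
    have hD : ((1 - 2 * q) * a ^ y') ≠ 0 := mul_ne_zero h2ne (pow_ne_zero _ hane)
    rw [h]; field_simp
  simp only [Nat.add_sub_cancel]
  rcases lt_trichotomy (x' + 1) y with hxy | hxy | hxy
  · -- x < y
    rw [if_neg (by omega : ¬ x' + 1 = y), min_eq_left (by omega : x' + 1 ≤ y),
      min_eq_left (by omega : x' + 1 + 1 ≤ y)]
    by_cases hx0 : x' = 0
    · subst hx0
      rw [if_pos rfl, mul_zero, add_zero]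
      exact key2 y _ _ 0 (by linear_combination (1 - a) * hqa)
    · rw [if_neg (by omega : ¬ x' + 1 = 1), min_eq_left (by omega : x' ≤ y)]
      exact key3 y _ _ _ 0 (by linear_combination (a ^ x' * (1 - a)) * hqa)
  · -- x = y
    subst hxy
    rw [if_pos rfl, min_self, min_eq_right (by omega : x' + 1 ≤ x' + 1 + 1)]
    by_cases hx0 : x' = 0
    · subst hx0
      rw [if_pos rfl, mul_zero, add_zero]
      exact key2 (0 + 1) _ _ 1 (by linear_combination hqa)
    · rw [if_neg (by omega : ¬ x' + 1 = 1), min_eq_left (by omega : x' ≤ x' + 1)]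
      exact key3 (x' + 1) _ _ _ 1 (by linear_combination (a ^ x') * hqa)
  · -- y < x
    rw [if_neg (by omega : ¬ x' + 1 = y), min_eq_right (by omega : y ≤ x' + 1),
      min_eq_right (by omega : y ≤ x' + 1 + 1), if_neg (by omega : ¬ x' + 1 = 1),
      min_eq_right (by omega : y ≤ x')]
    ring


lemma homog_zero {a : ℝ} (hadef : a = (1 - q) / q)
    (u : ℕ → ℝ) (B : ℝ) (hb : ∀ x, 1 ≤ x → |u x| ≤ B)
    (hrec : ∀ x, 1 ≤ x → u x = q * u (x + 1) + (1 - q) * (if x = 1 then 0 else u (x - 1))) :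
    ∀ x, 1 ≤ x → u x = 0 := by
  have h1 : 1 < a := hadef ▸ ha1 hq0 hq
  have hqne : q ≠ 0 := ne_of_gt hq0
  have hqa : q * a = 1 - q := by rw [hadef, mul_comm, div_mul_cancel₀ _ hqne]
  have hane : a - 1 ≠ 0 := by linarith
  set c : ℝ := u 1 / (a - 1) with hc
  have claim : ∀ x : ℕ, 1 ≤ x → u x = c * (a ^ x - 1) ∧ u (x + 1) = c * (a ^ (x + 1) - 1) := by
    intro x hx
    induction x, hx using Nat.le_induction with
    | base =>
      constructor
      · rw [hc, pow_one]; field_simp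
      · have h := hrec 1 le_rfl
        rw [if_pos rfl, mul_zero, add_zero] at h
        have h2 : u (1 + 1) = u 1 / q := by rw [h]; field_simp
        rw [h2, hc]
        field_simp
        linear_combination (u 1 * (1 - a)) * hqa
    | succ n hn ih =>
      refine ⟨ih.2, ?_⟩
      have h := hrec (n + 1) (by omega)
      rw [if_neg (by omega : ¬ n + 1 = 1)] at h
      simp only [Nat.add_sub_cancel] at h
      have key : q * (c * (a ^ (n + 1 + 1) - 1)) = u (n + 1) - (1 - q) * u n := by
        rw [ih.1, ih.2]
        linear_combination (c * a ^ n * (a - 1)) * hqa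
      have hxx : q * u (n + 1 + 1) = q * (c * (a ^ (n + 1 + 1) - 1)) := by
        rw [key]; linarith
      exact mul_left_cancel₀ hqne hxx
  have hu : ∀ x, 1 ≤ x → u x = c * (a ^ x - 1) := fun x hx => (claim x hx).1
  by_cases hc0 : c = 0
  · intro x hx; rw [hu x hx, hc0, zero_mul]
  · exfalso
    have hcpos : 0 < |c| := abs_pos.2 hc0
    have hb' : ∀ x : ℕ, 1 ≤ x → |c| * ((x : ℝ) * (a - 1)) ≤ B := by
      intro x hx
      have hbern : 1 + (x : ℝ) * (a - 1) ≤ a ^ x := by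
        have hh := one_add_mul_le_pow (show (-2:ℝ) ≤ a - 1 by linarith) x
        rw [show (1 + (a - 1)) = a from by ring] at hh
        exact hh
      have hB := hb x hx
      rw [hu x hx, abs_mul, abs_of_nonneg (show (0:ℝ) ≤ a ^ x - 1 by nlinarith)] at hB
      have : |c| * ((x:ℝ) * (a - 1)) ≤ |c| * (a ^ x - 1) :=
        mul_le_mul_of_nonneg_left (by linarith) (abs_nonneg c)
      linarith
    obtain ⟨n, hn⟩ := exists_nat_gt (B / (|c| * (a - 1)))
    have hd : 0 < |c| * (a - 1) := mul_pos hcpos (by linarith)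
    rw [div_lt_iff₀ hd] at hn
    have h5 := hb' (n + 1) (by omega)
    push_cast at h5
    nlinarith [hd]

end
end BB2


namespace BB2
open BB

lemma green_formula (q : ℝ) (hq0 : 0 < q) (hq : q < 1 / 2) (M : MC ℕ) (hp : M.p = bangP q)
    (y : ℕ) (hy : 1 ≤ y) :
    ∀ x, 1 ≤ x → M.green 0 x y = ENNReal.ofReal (gR q x y) := by
  have h2 := h12 hq0 hq
  have hub : ∀ N z, 1 ≤ z → Sp q N z y ≤ ENNReal.ofReal (gR q z y) := by
    intro N
    induction N with
    | zero => intro z hz; rw [Sp, Finset.range_zero, Finset.sum_empty]; exact zero_le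
    | succ N ih =>
      intro z hz
      rw [Sp_succ q N z y hz]
      have hind : (0:ℝ) ≤ (if z = y then (1:ℝ) else 0) := by split <;> norm_num
      have hg1 : (0:ℝ) ≤ gR q (z + 1) y := gR_nonneg hq0 hq _ _
      have hg2 : (0:ℝ) ≤ (if z = 1 then (0:ℝ) else gR q (z - 1) y) := by
        split
        · exact le_refl _
        · exact gR_nonneg hq0 hq _ _
      have hofr : ENNReal.ofReal (gR q z y)
          = (if z = y then 1 else 0) + ENNReal.ofReal q * ENNReal.ofReal (gR q (z + 1) y)
            + ENNReal.ofReal (1 - q) * (if z = 1 then 0 else ENNReal.ofReal (gR q (z - 1) y)) := by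
        rw [gR_rec hq0 hq z y hz hy,
          ENNReal.ofReal_add (add_nonneg hind (mul_nonneg hq0.le hg1))
            (mul_nonneg (by linarith) hg2),
          ENNReal.ofReal_add hind (mul_nonneg hq0.le hg1),
          ENNReal.ofReal_mul hq0.le, ENNReal.ofReal_mul (by linarith : (0:ℝ) ≤ 1 - q)]
        congr 1
        · congr 1
          · split <;> simp
        · congr 1
          split <;> simp
      rw [hofr]
      refine add_le_add (add_le_add le_rfl (mul_le_mul_right (ih (z + 1) (by omega)) _)) ?_
      refine mul_le_mul_right ?_ _
      by_cases h1 : z = 1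
      · rw [if_pos h1, if_pos h1]
      · rw [if_neg h1, if_neg h1]; exact ih (z - 1) (by omega)
  have hGle : ∀ z, 1 ≤ z → (∑' n, f q n z y) ≤ ENNReal.ofReal (gR q z y) := by
    intro z hz
    rw [ENNReal.tsum_eq_iSup_nat]
    exact iSup_le fun N => hub N z hz
  have hfin : ∀ z, 1 ≤ z → (∑' n, f q n z y) ≠ ⊤ :=
    fun z hz => ne_top_of_le_ne_top ENNReal.ofReal_ne_top (hGle z hz)
  have htrec : ∀ z, 1 ≤ z → (∑' n, f q n z y).toReal
      = (if z = y then 1 else 0) + q * (∑' n, f q n (z + 1) y).toReal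
        + (1 - q) * (if z = 1 then 0 else (∑' n, f q n (z - 1) y).toReal) := by
    intro z hz
    have h := congrArg ENNReal.toReal (G_fix q z y hz)
    have e1 : ((if z = y then (1:ℝ≥0∞) else 0)) ≠ ⊤ := by split <;> simp
    have e2 : ENNReal.ofReal q * (∑' n, f q n (z + 1) y) ≠ ⊤ :=
      ENNReal.mul_ne_top ENNReal.ofReal_ne_top (hfin (z + 1) (by omega))
    have e3 : ENNReal.ofReal (1 - q) * (if z = 1 then 0 else (∑' n, f q n (z - 1) y)) ≠ ⊤ := by
      refine ENNReal.mul_ne_top ENNReal.ofReal_ne_top ?_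
      split
      · simp
      · exact hfin (z - 1) (by omega)
    rw [ENNReal.toReal_add (ENNReal.add_ne_top.2 ⟨e1, e2⟩) e3, ENNReal.toReal_add e1 e2,
      ENNReal.toReal_mul, ENNReal.toReal_mul, ENNReal.toReal_ofReal hq0.le,
      ENNReal.toReal_ofReal (by linarith : (0:ℝ) ≤ 1 - q)] at h
    rw [h]
    congr 1
    · congr 1
      · split <;> simp
    · congr 1
      split <;> simp
  have hurec : ∀ z, 1 ≤ z → (gR q z y - (∑' n, f q n z y).toReal)
      = q * (gR q (z + 1) y - (∑' n, f q n (z + 1) y).toReal)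
        + (1 - q) * (if z = 1 then 0
            else (gR q (z - 1) y - (∑' n, f q n (z - 1) y).toReal)) := by
    intro z hz
    have hg := gR_rec hq0 hq z y hz hy
    have ht := htrec z hz
    by_cases h1 : z = 1
    · rw [if_pos h1]; rw [if_pos h1] at hg ht; linarith
    · rw [if_neg h1]; rw [if_neg h1] at hg ht; linarith
  have hbd : ∀ z, 1 ≤ z → |gR q z y - (∑' n, f q n z y).toReal| ≤ 1 / (1 - 2 * q) := by
    intro z hz
    have h3 : (∑' n, f q n z y).toReal ≤ gR q z y :=
      ENNReal.toReal_le_of_le_ofReal (gR_nonneg hq0 hq z y) (hGle z hz)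
    have h4 : (0:ℝ) ≤ (∑' n, f q n z y).toReal := ENNReal.toReal_nonneg
    have h5 := gR_le hq0 hq z y
    rw [abs_of_nonneg (by linarith)]
    linarith
  have hu0 := homog_zero hq0 hq rfl (fun z => gR q z y - (∑' n, f q n z y).toReal)
      (1 / (1 - 2 * q)) hbd hurec
  intro x hx
  have hxe : (∑' n, f q n x y).toReal = gR q x y := by
    have := hu0 x hx
    linarith
  rw [green_eq q M hp x y, ← ENNReal.ofReal_toReal (hfin x hx), hxe]

end BB2


/-- Green function formulas for the bang-bang random walk with parameter `q ∈ (0,1/2)`,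
`α = (1-q)/q`, killed just before the first positive hitting time of `0`:
`G_0(y,y) = (1 − (q/(1−q))^y)/(1−2q)` for `y > 0`, `G_0(x,y) = G_0(y,y)` for `x ≥ y > 0`,
and `G_0(x,y) = (α^x − 1)/((1−2q)·α^y)` for `0 < x ≤ y`. -/
theorem bang_bang_green_killed
    (q : ℝ) (hq0 : 0 < q) (hq : q < 1 / 2) (M : MC ℕ) (hp : M.p = bangP q) :
    (∀ y : ℕ, 0 < y →
      M.green 0 y y = ENNReal.ofReal ((1 - (q / (1 - q)) ^ y) / (1 - 2 * q))) ∧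
    (∀ x y : ℕ, 0 < y → y ≤ x → M.green 0 x y = M.green 0 y y) ∧
    (∀ x y : ℕ, 0 < x → x ≤ y →
      M.green 0 x y
        = ENNReal.ofReal ((((1 - q) / q) ^ x - 1) / ((1 - 2 * q) * ((1 - q) / q) ^ y))) := by
  have h2 : (0:ℝ) < 1 - 2 * q := by linarith
  have hq1 : (0:ℝ) < 1 - q := by linarith
  refine ⟨?_, ?_, ?_⟩
  · intro y hy
    rw [BB2.green_formula q hq0 hq M hp y hy y hy]
    congr 1
    unfold BB2.gR
    rw [min_self]
    have ha0 : (0:ℝ) < (1 - q) / q := by positivity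
    have hpy : (0:ℝ) < ((1 - q) / q) ^ y := by positivity
    have hqq : (q / (1 - q)) ^ y = (((1 - q) / q) ^ y)⁻¹ := by
      rw [← inv_pow, inv_div]
    have hPne : ((1 - q) / q) ^ y ≠ 0 := ne_of_gt hpy
    have e : (1:ℝ) - (((1 - q) / q) ^ y)⁻¹
        = (((1 - q) / q) ^ y - 1) / ((1 - q) / q) ^ y := by
      field_simp
    rw [hqq, e, div_div, mul_comm]
  · intro x y hy hyx
    rw [BB2.green_formula q hq0 hq M hp y hy x (le_trans hy hyx),
      BB2.green_formula q hq0 hq M hp y hy y hy]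
    congr 1
    unfold BB2.gR
    rw [min_eq_right hyx, min_self]
  · intro x y hx hxy
    rw [BB2.green_formula q hq0 hq M hp y (le_trans hx hxy) x hx]
    congr 1
    unfold BB2.gR
    rw [min_eq_left hxy]
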